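/- Let w_1, ..., w_m be i.i.d. standard Gaussian random vectors on ℝ^d and let φ be the PRF map with m features. Let q, k ∈ ℝ^d with ‖q‖ ≤ R and ‖k‖ ≤ R for some R > 0. Then for every ε > 0, Pr(|⟨φ(q), φ(k)⟩ − exp(⟨q, k⟩)| ≥ ε·exp(⟨q, k⟩)) ≤ exp(4R²) / (m·ε²). -/

import Mathlib

open MeasureTheory ProbabilityTheory

/-- The joint law of `m` i.i.d. standard Gaussian random vectors on `ℝ^d`. -/
noncomputable def iidStdGaussian (m d : ℕ) : Measure (Fin m → Fin d → ℝ) :=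
  Measure.pi fun _ => Measure.pi fun _ => gaussianReal 0 1

/-- The Positive Random Feature (PRF) map with `m` features:
`φ(x)_i = (exp (−‖x‖²/2)/√m) · exp ⟨w_i, x⟩`. -/
noncomputable def prf (m d : ℕ) (W : Fin m → Fin d → ℝ) (x : Fin d → ℝ) : Fin m → ℝ :=
  fun i => (Real.exp (-(∑ j, (x j) ^ 2) / 2) / Real.sqrt m) * Real.exp (∑ j, W i j * x j)

open Real
open scoped ENNReal NNReal

lemma gauss_shift_int (t : ℝ) : ∫ x : ℝ, Real.exp (-(1/2) * (x - t)^2) = Real.sqrt (2 * Real.pi) := by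
  rw [integral_sub_right_eq_self (fun x : ℝ => Real.exp (-(1/2) * x^2)) t, integral_gaussian,
    mul_comm]
  norm_num

lemma gauss_pdf_mul (t x : ℝ) :
    gaussianPDFReal 0 1 x * Real.exp (t * x) =
      (Real.sqrt (2 * Real.pi))⁻¹ * (Real.exp (-(1/2) * (x - t)^2) * Real.exp (t^2/2)) := by
  rw [gaussianPDFReal]
  push_cast
  rw [mul_assoc, ← Real.exp_add, ← Real.exp_add]
  norm_num
  left; ring

lemma gauss_integrand_int (t : ℝ) :
    Integrable (fun x : ℝ => gaussianPDFReal 0 1 x * Real.exp (t * x)) := by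
  simp_rw [gauss_pdf_mul t]
  exact (((integrable_exp_neg_mul_sq (by norm_num : (0:ℝ) < 1/2)).comp_sub_right
    t).mul_const _).const_mul _

lemma gauss_integrable_exp (t : ℝ) :
    Integrable (fun x : ℝ => Real.exp (t * x)) (gaussianReal 0 1) := by
  rw [gaussianReal_of_var_ne_zero 0 one_ne_zero, gaussianPDF_def]
  rw [integrable_withDensity_iff ((measurable_gaussianPDFReal 0 1).ennreal_ofReal)
    (ae_of_all _ fun x => ENNReal.ofReal_lt_top)]
  simp_rw [ENNReal.toReal_ofReal (gaussianPDFReal_nonneg 0 1 _)]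
  simpa [mul_comm] using gauss_integrand_int t

lemma gauss_mgf (t : ℝ) :
    ∫ x, Real.exp (t * x) ∂(gaussianReal 0 1) = Real.exp (t^2 / 2) := by
  rw [gaussianReal_of_var_ne_zero 0 one_ne_zero, gaussianPDF_def]
  have h1 : (fun x => ENNReal.ofReal (gaussianPDFReal 0 1 x)) =
      fun x => ((gaussianPDFReal 0 1 x).toNNReal : ℝ≥0∞) := rfl
  rw [h1, integral_withDensity_eq_integral_smul ((measurable_gaussianPDFReal 0 1).real_toNNReal) _]
  have h2 : ∀ x : ℝ, (gaussianPDFReal 0 1 x).toNNReal • Real.exp (t * x)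
      = gaussianPDFReal 0 1 x * Real.exp (t * x) := by
    intro x
    simp [NNReal.smul_def, Real.coe_toNNReal _ (gaussianPDFReal_nonneg 0 1 x)]
  simp_rw [h2, gauss_pdf_mul t]
  rw [integral_const_mul, integral_mul_const, gauss_shift_int]
  rw [← mul_assoc, inv_mul_cancel₀ (by positivity : Real.sqrt (2*Real.pi) ≠ 0), one_mul]

section PiHelpers
variable {ι : Type*} [Fintype ι] {E : Type*} [MeasurableSpace E]

lemma pi_integrable_prod {μ : Measure E} [SigmaFinite μ] {f : ι → E → ℝ}
    (hf : ∀ i, Integrable (f i) μ) :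
    Integrable (fun x : ι → E => ∏ i, f i (x i)) (Measure.pi fun _ => μ) := by
  letI : MeasureSpace E := ⟨μ⟩
  exact Integrable.fintype_prod (𝕜 := ℝ) hf

lemma pi_integral_prod {μ : Measure E} [SigmaFinite μ] (f : ι → E → ℝ) :
    ∫ x : ι → E, ∏ i, f i (x i) ∂(Measure.pi fun _ => μ) = ∏ i, ∫ x, f i x ∂μ := by
  letI : MeasureSpace E := ⟨μ⟩
  exact integral_fintype_prod_eq_prod (𝕜 := ℝ) (fun _ => f _) (μ := fun _ => μ)

end PiHelpers

lemma gaussPi_integrable {d : ℕ} (v : Fin d → ℝ) :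
    Integrable (fun w : Fin d → ℝ => Real.exp (∑ j, w j * v j))
      (Measure.pi fun _ => gaussianReal 0 1) := by
  simp_rw [Real.exp_sum]
  exact pi_integrable_prod fun j => by simpa [mul_comm] using gauss_integrable_exp (v j)

lemma gaussPi_integral {d : ℕ} (v : Fin d → ℝ) :
    ∫ w : Fin d → ℝ, Real.exp (∑ j, w j * v j) ∂(Measure.pi fun _ => gaussianReal 0 1)
      = Real.exp (∑ j, (v j)^2 / 2) := by
  simp_rw [Real.exp_sum]
  rw [pi_integral_prod (fun j x => Real.exp (x * v j))]
  refine Finset.prod_congr rfl fun j _ => ?_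
  simpa [mul_comm] using gauss_mgf (v j)

lemma gauss2_integrable {m d : ℕ} (a : Fin m → Fin d → ℝ) :
    Integrable (fun W : Fin m → Fin d → ℝ => Real.exp (∑ i, ∑ j, W i j * a i j))
      (iidStdGaussian m d) := by
  simp_rw [Real.exp_sum (s := (Finset.univ : Finset (Fin m)))]
  rw [iidStdGaussian]
  exact pi_integrable_prod fun i => gaussPi_integrable (a i)

lemma gauss2_integral {m d : ℕ} (a : Fin m → Fin d → ℝ) :
    ∫ W : Fin m → Fin d → ℝ, Real.exp (∑ i, ∑ j, W i j * a i j) ∂(iidStdGaussian m d)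
      = Real.exp (∑ i, ∑ j, (a i j)^2 / 2) := by
  simp_rw [Real.exp_sum (s := (Finset.univ : Finset (Fin m)))]
  rw [iidStdGaussian, pi_integral_prod (fun i (w : Fin d → ℝ) => Real.exp (∑ j, w j * a i j))]
  exact Finset.prod_congr rfl fun i _ => gaussPi_integral (a i)

lemma exp_rewr {m d : ℕ} (c : Fin m → ℝ) (v : Fin d → ℝ) (W : Fin m → Fin d → ℝ) :
    (∑ i, c i * ∑ j, W i j * v j) = ∑ i, ∑ j, W i j * (c i * v j) := by
  refine Finset.sum_congr rfl fun i _ => ?_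
  rw [Finset.mul_sum]
  exact Finset.sum_congr rfl fun j _ => by ring

lemma master_integrable {m d : ℕ} (c : Fin m → ℝ) (v : Fin d → ℝ) :
    Integrable (fun W : Fin m → Fin d → ℝ => Real.exp (∑ i, c i * ∑ j, W i j * v j))
      (iidStdGaussian m d) := by
  simp_rw [exp_rewr]
  exact gauss2_integrable _

lemma master_integral {m d : ℕ} (c : Fin m → ℝ) (v : Fin d → ℝ) :
    ∫ W : Fin m → Fin d → ℝ, Real.exp (∑ i, c i * ∑ j, W i j * v j) ∂(iidStdGaussian m d)
      = Real.exp ((∑ i, (c i)^2) * (∑ j, (v j)^2) / 2) := by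
  simp_rw [exp_rewr]
  rw [gauss2_integral]
  congr 1
  have h : ∀ i : Fin m, ∑ j, (c i * v j)^2 / 2 = (c i)^2 * ((∑ j, (v j)^2) / 2) := by
    intro i
    simp_rw [mul_pow, mul_div_assoc]
    rw [← Finset.mul_sum, Finset.sum_div]
  simp_rw [h]
  rw [← Finset.sum_mul]
  ring

lemma single_sum {m : ℕ} (i : Fin m) (t : Fin m → ℝ) :
    t i = ∑ l, (if l = i then (1:ℝ) else 0) * t l := by
  simp [ite_mul, Finset.sum_ite_eq']

lemma single_sq {m : ℕ} (i : Fin m) :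
    ∑ l, ((if l = i then (1:ℝ) else 0))^2 = 1 := by
  simp [ite_pow, Finset.sum_ite_eq']

lemma pair_sum {m : ℕ} (i i' : Fin m) (t : Fin m → ℝ) :
    t i + t i' = ∑ l, ((if l = i then (1:ℝ) else 0) + (if l = i' then 1 else 0)) * t l := by
  simp [add_mul, ite_mul, Finset.sum_add_distrib, Finset.sum_ite_eq']

lemma pair_sq {m : ℕ} (i i' : Fin m) :
    ∑ l, (((if l = i then (1:ℝ) else 0) + (if l = i' then 1 else 0)))^2
      = if i = i' then 4 else 2 := by
  rcases eq_or_ne i i' with h | h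
  · subst h
    simp [← two_mul, mul_pow, Finset.sum_ite_eq']
    norm_num
  · have : ∀ l : Fin m, ((if l = i then (1:ℝ) else 0) + (if l = i' then 1 else 0))^2
        = (if l = i then (1:ℝ) else 0) + (if l = i' then 1 else 0) := by
      intro l
      rcases eq_or_ne l i with hl | hl <;> rcases eq_or_ne l i' with hl' | hl' <;>
        simp_all <;> norm_num
    simp_rw [this]
    rw [Finset.sum_add_distrib]
    simp [Finset.sum_ite_eq', h]
    norm_num

theorem prf_concentration' (m d : ℕ) (hm : 0 < m) (q k : Fin d → ℝ) (R : ℝ)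
    (hR : 0 < R) (hq : Real.sqrt (∑ j, (q j) ^ 2) ≤ R)
    (hk : Real.sqrt (∑ j, (k j) ^ 2) ≤ R) (ε : ℝ) (hε : 0 < ε)
    (prf : ∀ (m d : ℕ) (W : Fin m → Fin d → ℝ) (x : Fin d → ℝ), Fin m → ℝ)
    (hprf : ∀ (m d : ℕ) (W : Fin m → Fin d → ℝ) (x : Fin d → ℝ) (i : Fin m),
      prf m d W x i = (Real.exp (-(∑ j, (x j) ^ 2) / 2) / Real.sqrt m) *
        Real.exp (∑ j, W i j * x j)) :
    iidStdGaussian m d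
        {W | ε * Real.exp (∑ j, q j * k j) ≤
          |(∑ i, prf m d W q i * prf m d W k i) - Real.exp (∑ j, q j * k j)|}
      ≤ ENNReal.ofReal (Real.exp (4 * R ^ 2) / (m * ε ^ 2)) := by
  classical
  haveI hPprob : IsProbabilityMeasure (iidStdGaussian m d) := by
    rw [iidStdGaussian]; infer_instance
  set P := iidStdGaussian m d with hP
  set Q : ℝ := ∑ j, (q j)^2 with hQdef
  set K : ℝ := ∑ j, (k j)^2 with hKdef
  set ip : ℝ := ∑ j, q j * k j with hipdef
  set v : Fin d → ℝ := fun j => q j + k j with hvdef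
  set V : ℝ := ∑ j, (v j)^2 with hVdef
  set C0 : ℝ := Real.exp (-(Q + K) / 2) / m with hC0def
  have hmR : (0:ℝ) < m := Nat.cast_pos.mpr hm
  have hmne : (m:ℝ) ≠ 0 := hmR.ne'
  -- basic scalar facts
  have hV : V = Q + K + 2 * ip := by
    rw [hVdef, hQdef, hKdef, hipdef]
    simp_rw [hvdef, add_sq]
    rw [Finset.sum_add_distrib, Finset.sum_add_distrib]
    have h2 : ∑ x : Fin d, 2 * q x * k x = 2 * ∑ j, q j * k j := by
      rw [Finset.mul_sum]
      exact Finset.sum_congr rfl fun j _ => by ring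
    rw [h2]
    ring
  have hQle : Q ≤ R^2 := by
    calc Q = Real.sqrt Q ^ 2 := by
          rw [Real.sq_sqrt]; rw [hQdef]; positivity
      _ ≤ R^2 := by
          apply pow_le_pow_left₀ (Real.sqrt_nonneg _) hq
  have hKle : K ≤ R^2 := by
    calc K = Real.sqrt K ^ 2 := by
          rw [Real.sq_sqrt]; rw [hKdef]; positivity
      _ ≤ R^2 := by
          apply pow_le_pow_left₀ (Real.sqrt_nonneg _) hk
  have hiple : ip ≤ R^2 := by
    have h1 : ip^2 ≤ Q * K := by
      rw [hipdef, hQdef, hKdef]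
      exact Finset.sum_mul_sq_le_sq_mul_sq Finset.univ q k
    have h2 : ip ≤ |ip| := le_abs_self ip
    have h3 : |ip| = Real.sqrt (ip^2) := (Real.sqrt_sq_eq_abs ip).symm
    have h4 : Real.sqrt (ip^2) ≤ Real.sqrt (R^2 * R^2) := by
      apply Real.sqrt_le_sqrt
      calc ip^2 ≤ Q * K := h1
        _ ≤ R^2 * R^2 := by
            apply mul_le_mul hQle hKle _ (by positivity)
            rw [hKdef]; positivity
    have h5 : Real.sqrt (R^2 * R^2) = R^2 := by
      rw [← pow_two, Real.sqrt_sq (by positivity)]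
    linarith
  -- the simplified summands
  set S : (Fin m → Fin d → ℝ) → ℝ := fun W => ∑ i, C0 * Real.exp (∑ j, W i j * v j)
    with hSdef
  have h_prf : ∀ (W : Fin m → Fin d → ℝ) (i : Fin m),
      prf m d W q i * prf m d W k i = C0 * Real.exp (∑ j, W i j * v j) := by
    intro W i
    have hm2 : Real.sqrt m * Real.sqrt m = (m:ℝ) := Real.mul_self_sqrt (Nat.cast_nonneg m)
    have hsum : (∑ j, W i j * q j) + (∑ j, W i j * k j) = ∑ j, W i j * v j := by
      rw [← Finset.sum_add_distrib]
      exact Finset.sum_congr rfl fun j _ => by simp [hvdef]; ring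
    rw [hprf, hprf]
    rw [show (Real.exp (-(∑ j, (q j)^2)/2) / Real.sqrt m * Real.exp (∑ j, W i j * q j)) *
        (Real.exp (-(∑ j, (k j)^2)/2) / Real.sqrt m * Real.exp (∑ j, W i j * k j))
        = (Real.exp (-(∑ j, (q j)^2)/2) * Real.exp (-(∑ j, (k j)^2)/2) /
            (Real.sqrt m * Real.sqrt m)) *
          (Real.exp (∑ j, W i j * q j) * Real.exp (∑ j, W i j * k j)) from by ring]
    rw [hm2, ← Real.exp_add, ← Real.exp_add, hsum, hC0def]
    congr 2
    rw [hQdef, hKdef]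
    ring
  -- integrability and moments
  have hX_int : ∀ i : Fin m,
      Integrable (fun W : Fin m → Fin d → ℝ => Real.exp (∑ j, W i j * v j)) P := by
    intro i
    have := master_integrable (m := m) (fun l => if l = i then (1:ℝ) else 0) v
    rw [← hP] at this
    simpa [← single_sum] using this
  have hX_val : ∀ i : Fin m,
      ∫ W, Real.exp (∑ j, W i j * v j) ∂P = Real.exp (V / 2) := by
    intro i
    have := master_integral (m := m) (fun l => if l = i then (1:ℝ) else 0) v
    rw [single_sq, one_mul] at this
    rw [← hP, ← hVdef] at this
    simpa [← single_sum] using this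
  have hXX_int : ∀ i i' : Fin m,
      Integrable (fun W : Fin m → Fin d → ℝ =>
        Real.exp ((∑ j, W i j * v j) + ∑ j, W i' j * v j)) P := by
    intro i i'
    have := master_integrable (m := m)
      (fun l => (if l = i then (1:ℝ) else 0) + (if l = i' then 1 else 0)) v
    rw [← hP] at this
    simpa [← pair_sum] using this
  have hXX_val : ∀ i i' : Fin m,
      ∫ W, Real.exp ((∑ j, W i j * v j) + ∑ j, W i' j * v j) ∂P
        = Real.exp ((if i = i' then (4:ℝ) else 2) * V / 2) := by
    intro i i'
    have := master_integral (m := m)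
      (fun l => (if l = i then (1:ℝ) else 0) + (if l = i' then 1 else 0)) v
    rw [pair_sq, ← hP, ← hVdef] at this
    simpa [← pair_sum] using this
  have hS_int : Integrable S P := by
    rw [hSdef]
    exact integrable_finset_sum _ fun i _ => (hX_int i).const_mul C0
  have hES : ∫ W, S W ∂P = Real.exp ip := by
    rw [hSdef]
    rw [integral_finset_sum _ fun i _ => (hX_int i).const_mul C0]
    simp_rw [integral_const_mul, hX_val]
    rw [Finset.sum_const, Finset.card_univ, Fintype.card_fin, nsmul_eq_mul]
    rw [hC0def]
    have hcalc : (m:ℝ) * (Real.exp (-(Q+K)/2) / m * Real.exp (V/2))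
        = Real.exp (-(Q+K)/2) * Real.exp (V/2) := by field_simp
    rw [hcalc, ← Real.exp_add, hV]
    congr 1
    ring
  -- measurability
  have hSmeas : AEStronglyMeasurable S P := by
    rw [hSdef]
    apply Measurable.aestronglyMeasurable
    apply Finset.measurable_sum
    intro i _
    apply Measurable.const_mul
    apply Real.measurable_exp.comp
    apply Finset.measurable_sum
    intro j _
    exact (((measurable_pi_apply j).comp (measurable_pi_apply i) : Measurable
      fun W : Fin m → Fin d → ℝ => W i j)).mul_const (v j)
  have hsq : ∀ W : Fin m → Fin d → ℝ, S W ^ 2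
      = ∑ i, ∑ i', C0^2 * Real.exp ((∑ j, W i j * v j) + ∑ j, W i' j * v j) := by
    intro W
    rw [hSdef, sq, Finset.sum_mul_sum]
    refine Finset.sum_congr rfl fun i _ => Finset.sum_congr rfl fun i' _ => ?_
    rw [Real.exp_add]
    ring
  have hSsq_int : Integrable (fun W => S W ^ 2) P := by
    simp_rw [hsq]
    exact integrable_finset_sum _ fun i _ =>
      integrable_finset_sum _ fun i' _ => (hXX_int i i').const_mul _
  have hMem : MemLp S 2 P := (memLp_two_iff_integrable_sq hSmeas).2 hSsq_int
  have hES2 : ∫ W, S W ^ 2 ∂P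
      = (m:ℝ) * ((m:ℝ) * (C0^2 * Real.exp V)
        + (C0^2 * Real.exp (2*V) - C0^2 * Real.exp V)) := by
    simp_rw [hsq]
    rw [integral_finset_sum _ (fun i _ =>
      integrable_finset_sum _ fun i' _ => (hXX_int i i').const_mul _)]
    have hrow : ∀ i : Fin m, ∫ W, (∑ i', C0^2 *
        Real.exp ((∑ j, W i j * v j) + ∑ j, W i' j * v j)) ∂P
        = ∑ i', C0^2 * Real.exp ((if i = i' then (4:ℝ) else 2) * V / 2) := by
      intro i
      rw [integral_finset_sum _ (fun i' _ => (hXX_int i i').const_mul _)]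
      refine Finset.sum_congr rfl fun i' _ => ?_
      rw [integral_const_mul, hXX_val i i']
    simp_rw [hrow]
    have hterm : ∀ i i' : Fin m,
        C0^2 * Real.exp ((if i = i' then (4:ℝ) else 2) * V / 2)
        = C0^2 * Real.exp V
          + (if i' = i then C0^2 * Real.exp (2*V) - C0^2 * Real.exp V else 0) := by
      intro i i'
      rcases eq_or_ne i i' with h | h
      · subst h
        rw [if_pos rfl, if_pos rfl, show (4:ℝ) * V / 2 = 2*V by ring]
        ring
      · rw [if_neg h, if_neg (Ne.symm h), show (2:ℝ) * V / 2 = V by ring]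
        ring
    simp_rw [hterm]
    rw [Finset.sum_congr rfl (fun i (_ : i ∈ Finset.univ) => by
      rw [Finset.sum_add_distrib, Finset.sum_const, Finset.sum_ite_eq' Finset.univ i
        (fun _ => C0^2 * Real.exp (2*V) - C0^2 * Real.exp V), if_pos (Finset.mem_univ i),
        Finset.card_univ, Fintype.card_fin, nsmul_eq_mul])]
    rw [Finset.sum_const, Finset.card_univ, Fintype.card_fin, nsmul_eq_mul]
  have hC0sq : C0^2 = Real.exp (-(Q+K)) / (m:ℝ)^2 := by
    have hesq : Real.exp (-(Q+K)/2)^2 = Real.exp (-(Q+K)) := by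
      rw [sq, ← Real.exp_add]
      congr 1
      ring
    rw [hC0def, div_pow, hesq]
  have hA : C0^2 * Real.exp V = Real.exp (2*ip) / (m:ℝ)^2 := by
    rw [hC0sq, hV, div_mul_eq_mul_div, ← Real.exp_add,
      show (-(Q+K) + (Q + K + 2*ip)) = 2*ip by ring]
  have hB : C0^2 * Real.exp (2*V) = Real.exp (Q+K+4*ip) / (m:ℝ)^2 := by
    rw [hC0sq, hV, div_mul_eq_mul_div, ← Real.exp_add,
      show (-(Q+K) + 2*(Q + K + 2*ip)) = Q+K+4*ip by ring]
  have hexpip2 : Real.exp ip ^ 2 = Real.exp (2*ip) := by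
    rw [sq, ← Real.exp_add]
    congr 1
    ring
  have hVarle : variance S P ≤ Real.exp (Q + K + 4*ip) / m := by
    rw [variance_eq_sub hMem]
    have hPS2 : P[S ^ 2] = ∫ W, S W ^ 2 ∂P := rfl
    rw [hPS2, hES2, hES, hA, hB, hexpip2]
    have hcalc : (m:ℝ) * ((m:ℝ) * (Real.exp (2*ip)/(m:ℝ)^2)
        + (Real.exp (Q+K+4*ip)/(m:ℝ)^2 - Real.exp (2*ip)/(m:ℝ)^2)) - Real.exp (2*ip)
        = Real.exp (Q+K+4*ip)/m - Real.exp (2*ip)/m := by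
      field_simp
      ring
    rw [hcalc]
    have h1 : 0 ≤ Real.exp (2*ip) / m := div_nonneg (Real.exp_pos _).le hmR.le
    linarith
  -- Chebyshev
  have hc : 0 < ε * Real.exp ip := by positivity
  have hcheb := meas_ge_le_variance_div_sq (μ := P) hMem hc
  have hset : {W : Fin m → Fin d → ℝ | ε * Real.exp ip ≤
        |(∑ i, prf m d W q i * prf m d W k i) - Real.exp ip|}
      = {W | ε * Real.exp ip ≤ |S W - P[S]|} := by
    have hPS : P[S] = Real.exp ip := hES
    ext W
    simp only [Set.mem_setOf_eq, hPS]
    have hSW : (∑ i, prf m d W q i * prf m d W k i) = S W := by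
      rw [hSdef]
      exact Finset.sum_congr rfl fun i _ => h_prf W i
    rw [hSW]
  have hfinal : variance S P / (ε * Real.exp ip)^2 ≤ Real.exp (4*R^2) / (m * ε^2) := by
    have hstep1 : variance S P / (ε * Real.exp ip)^2
        ≤ (Real.exp (Q+K+4*ip) / m) / (ε * Real.exp ip)^2 := by
      gcongr
    have hstep2 : (Real.exp (Q+K+4*ip) / m) / (ε * Real.exp ip)^2
        = Real.exp (Q+K+2*ip) / (m * ε^2) := by
      rw [mul_pow, hexpip2, show Real.exp (Q+K+4*ip)
          = Real.exp (Q+K+2*ip) * Real.exp (2*ip) by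
        rw [← Real.exp_add]; congr 1; ring]
      rw [div_div, show (m:ℝ) * (ε^2 * Real.exp (2*ip)) = ((m:ℝ) * ε^2) * Real.exp (2*ip) by ring,
        mul_div_mul_right _ _ (Real.exp_ne_zero _)]
    have hstep3 : Real.exp (Q+K+2*ip) ≤ Real.exp (4*R^2) := by
      apply Real.exp_le_exp.2
      nlinarith
    calc variance S P / (ε * Real.exp ip)^2
        ≤ (Real.exp (Q+K+4*ip) / m) / (ε * Real.exp ip)^2 := hstep1
      _ = Real.exp (Q+K+2*ip) / (m * ε^2) := hstep2
      _ ≤ Real.exp (4*R^2) / (m * ε^2) := by gcongr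
  calc P {W | ε * Real.exp ip ≤
        |(∑ i, prf m d W q i * prf m d W k i) - Real.exp ip|}
      ≤ ENNReal.ofReal (variance S P / (ε * Real.exp ip)^2) := by rw [hset]; exact hcheb
    _ ≤ ENNReal.ofReal (Real.exp (4*R^2) / (m * ε^2)) := ENNReal.ofReal_le_ofReal hfinal

/-- Chebyshev-type concentration for the PRF estimator: if `‖q‖, ‖k‖ ≤ R` then
`Pr(|⟨φ(q), φ(k)⟩ − exp ⟨q, k⟩| ≥ ε exp ⟨q, k⟩) ≤ exp (4R²) / (m ε²)`. -/
theorem prf_pointwise_concentration (m d : ℕ) (hm : 0 < m) (q k : Fin d → ℝ) (R : ℝ)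
    (hR : 0 < R) (hq : Real.sqrt (∑ j, (q j) ^ 2) ≤ R)
    (hk : Real.sqrt (∑ j, (k j) ^ 2) ≤ R) (ε : ℝ) (hε : 0 < ε) :
    iidStdGaussian m d
        {W | ε * Real.exp (∑ j, q j * k j) ≤
          |(∑ i, prf m d W q i * prf m d W k i) - Real.exp (∑ j, q j * k j)|}
      ≤ ENNReal.ofReal (Real.exp (4 * R ^ 2) / (m * ε ^ 2)) :=
  prf_concentration' m d hm q k R hR hq hk ε hε prf (fun _ _ _ _ _ => rfl)
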